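/- Let J be a finite set with an involution γ: J → J, partitioned as J = J_f ⊔ J_1 ⊔ J_2 where γ fixes J_f pointwise and γ(J_1) = J_2. Define γ̃ on the matrix algebra M_J(ℂ) by γ̃(e_{μ,ν}) = e_{γ(ν),γ(μ)} on matrix units, extended ℂ-linearly. Then the real algebra M_J(ℂ)_ℝ = { a ∈ M_J(ℂ) : γ̃(a) = a* } is isomorphic, as a real algebra, to M_J(ℝ). -/

import Mathlib

open Matrix Complex in
private lemma stmt2_aux_mul {J : Type*} [Fintype J] [DecidableEq J]
    (γ : J → J) (hγγ : ∀ x, γ (γ x) = x)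
    (c₁ c₂ d₁ d₂ : J → ℂ)
    (hA : ∀ i, γ i ≠ i → c₁ i * d₁ i + c₂ i * d₂ (γ i) = 1)
    (hB : ∀ i, γ i ≠ i → c₂ i * d₁ (γ i) + c₁ i * d₂ i = 0)
    (hC : ∀ i, γ i = i → (c₁ i + c₂ i) * (d₁ i + d₂ i) = 1) :
    (Matrix.of (fun i j => (if j = i then c₁ i else 0) + (if j = γ i then c₂ i else 0)) *
     Matrix.of (fun i j => (if j = i then d₁ i else 0) + (if j = γ i then d₂ i else 0)) :
      Matrix J J ℂ) = 1 := by
  ext i j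
  rw [Matrix.mul_apply, Matrix.one_apply]
  have hswap : ∀ x : J, (j = γ x) ↔ (x = γ j) :=
    fun x => ⟨fun h => by rw [h, hγγ], fun h => by rw [h]; exact (hγγ j).symm⟩
  have h2a : (γ j = i) ↔ (j = γ i) :=
    ⟨fun h => by rw [← h, hγγ], fun h => by rw [h, hγγ]⟩
  have h2b : (i = γ j) ↔ (j = γ i) :=
    ⟨fun h => h2a.1 h.symm, fun h => (h2a.2 h).symm⟩
  have h3a : (γ j = γ i) ↔ (j = i) :=
    ⟨fun h => by rw [← hγγ j, h, hγγ], fun h => by rw [h]⟩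
  simp only [Matrix.of_apply, add_mul, mul_add, ite_mul, mul_ite, zero_mul,
    mul_zero, zero_add, add_zero, hswap, Finset.sum_add_distrib, Finset.sum_ite_eq',
    Finset.sum_ite_eq, Finset.mem_univ, if_true]
  simp only [h2a, h2b, h3a]
  by_cases hgi : γ i = i
  · by_cases hji : j = i
    · subst hji
      simp [hgi]
      linear_combination hC j hgi
    · have hjg : ¬ j = γ i := fun h => hji (h.trans hgi)
      have hij : ¬ i = j := fun h => hji h.symm
      simp [if_neg hji, if_neg hjg, if_neg hij]
  · by_cases hji : j = i
    · subst hji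
      have hjg : ¬ j = γ j := fun h => hgi h.symm
      simp only [if_pos rfl, if_neg hjg, add_zero, zero_add]
      exact hA j hgi
    · by_cases hjg : j = γ i
      · subst hjg
        have hij : ¬ i = γ i := fun h => hgi h.symm
        have hgii : ¬ γ i = i := hgi
        simp only [if_neg hgii, if_pos rfl, hγγ, zero_add, add_zero, if_neg hij, if_true]
        linear_combination hB i hgi
      · have hij : ¬ i = j := fun h => hji h.symm
        simp [if_neg hji, if_neg hjg, if_neg hij]


/-- Let `J` be finite with involution `γ`, partitioned `J = J_f ⊔ J₁ ⊔ J₂`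
where `γ` fixes `J_f` and `γ(J₁) = J₂`. With `γ̃` on `M_J(ℂ)` given by
`γ̃(e_{μ,ν}) = e_{γν,γμ}`, the real algebra `M_J(ℂ)_ℝ = {a : γ̃(a) = a*}` is isomorphic,
as a real algebra, to `M_J(ℝ)`: there is an injective ℝ-algebra homomorphism
`M_J(ℝ) → M_J(ℂ)` with range exactly `{a : γ̃(a) = a*}`. -/
theorem stmt_2 (J : Type*) [Fintype J] [DecidableEq J]
    (γ : J → J) (hγ : γ ∘ γ = id)
    (Jf J1 J2 : Finset J)
    (hpart : ∀ x : J,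
      (x ∈ Jf ∧ x ∉ J1 ∧ x ∉ J2) ∨ (x ∈ J1 ∧ x ∉ Jf ∧ x ∉ J2) ∨
        (x ∈ J2 ∧ x ∉ Jf ∧ x ∉ J1))
    (hf : ∀ x ∈ Jf, γ x = x) (h12 : Finset.image γ J1 = J2) :
    ∃ φ : Matrix J J ℝ →ₐ[ℝ] Matrix J J ℂ,
      Function.Injective φ ∧
      Set.range φ = {a : Matrix J J ℂ | ∀ i j, a (γ j) (γ i) = star (a j i)} := by
  classical
  have hγγ : ∀ x, γ (γ x) = x := fun x => congrFun hγ x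
  have hbij : Function.Bijective γ := Function.Involutive.bijective hγγ
  have h1 : ∀ i, i ∈ J1 → γ i ∈ J2 := fun i hi => h12 ▸ Finset.mem_image_of_mem γ hi
  have h2 : ∀ i, i ∈ J2 → γ i ∈ J1 := by
    intro i hi
    rw [← h12, Finset.mem_image] at hi
    obtain ⟨x, hx, rfl⟩ := hi
    rwa [hγγ]
  have h12' : ∀ i, i ∈ J1 → i ∉ J2 := by
    intro i hi
    rcases hpart i with ⟨_, h, _⟩ | ⟨_, _, h⟩ | ⟨_, _, h⟩
    · exact absurd hi h
    · exact h
    · exact absurd hi h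
  have h21' : ∀ i, i ∈ J2 → i ∉ J1 := fun i hi hi1 => h12' i hi1 hi
  have hg1 : ∀ i, i ∈ J1 → γ i ≠ i := fun i hi h => h12' i hi (h ▸ h1 i hi)
  have hg2 : ∀ i, i ∈ J2 → γ i ≠ i := fun i hi h => h21' i hi (h ▸ h2 i hi)
  have hfixmem : ∀ i, γ i = i → i ∉ J1 ∧ i ∉ J2 :=
    fun i h => ⟨fun hi => hg1 i hi h, fun hi => hg2 i hi h⟩
  -- coefficient functions
  set c₁ : J → ℂ := fun i => if i ∈ J2 then -Complex.I else 1 with hc₁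
  set c₂ : J → ℂ := fun i => if i ∈ J1 then Complex.I else if i ∈ J2 then 1 else 0 with hc₂
  set d₁ : J → ℂ := fun i => if i ∈ J1 then 1/2 else if i ∈ J2 then Complex.I/2 else 1 with hd₁
  set d₂ : J → ℂ := fun i => if i ∈ J1 then 1/2 else if i ∈ J2 then -(Complex.I/2) else 0
    with hd₂
  -- helper to evaluate coefficients by cases
  have cases3 : ∀ (P : J → Prop),
      (∀ i, i ∈ J1 → P i) → (∀ i, i ∈ J2 → P i) → (∀ i, i ∉ J1 → i ∉ J2 → P i) → ∀ i, P i := by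
    intro P hP1 hP2 hP3 i
    by_cases hi1 : i ∈ J1
    · exact hP1 i hi1
    · by_cases hi2 : i ∈ J2
      · exact hP2 i hi2
      · exact hP3 i hi1 hi2
  set s : Matrix J J ℂ :=
    Matrix.of (fun i j => (if j = i then c₁ i else 0) + (if j = γ i then c₂ i else 0)) with hsdef
  set t : Matrix J J ℂ :=
    Matrix.of (fun i j => (if j = i then d₁ i else 0) + (if j = γ i then d₂ i else 0)) with htdef
  have hfix0 : ∀ i, i ∉ J1 → i ∉ J2 → γ i = i := by
    intro i hi1 hi2
    rcases hpart i with ⟨hm, _, _⟩ | ⟨hm, _, _⟩ | ⟨hm, _, _⟩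
    · exact hf i hm
    · exact absurd hm hi1
    · exact absurd hm hi2
  have hst : s * t = 1 := by
    refine stmt2_aux_mul γ hγγ c₁ c₂ d₁ d₂ ?_ ?_ ?_
    · refine cases3 _ ?_ ?_ ?_
      · intro i hi _
        simp only [hc₁, hc₂, hd₁, hd₂, if_pos hi, if_neg (h12' i hi),
          if_pos (h1 i hi), if_neg (h21' _ (h1 i hi))]
        linear_combination ((-1)/2 : ℂ) * Complex.I_mul_I
      · intro i hi _
        simp only [hc₁, hc₂, hd₁, hd₂, if_pos hi, if_neg (h21' i hi),
          if_pos (h2 i hi), if_neg (h12' _ (h2 i hi))]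
        linear_combination ((-1)/2 : ℂ) * Complex.I_mul_I
      · intro i hi1 hi2 h
        exact absurd (hfix0 i hi1 hi2) h
    · refine cases3 _ ?_ ?_ ?_
      · intro i hi _
        simp only [hc₁, hc₂, hd₁, hd₂, if_pos hi, if_neg (h12' i hi),
          if_pos (h1 i hi), if_neg (h21' _ (h1 i hi))]
        linear_combination (1/2 : ℂ) * Complex.I_mul_I
      · intro i hi _
        simp only [hc₁, hc₂, hd₁, hd₂, if_pos hi, if_neg (h21' i hi),
          if_pos (h2 i hi), if_neg (h12' _ (h2 i hi))]
        linear_combination (1/2 : ℂ) * Complex.I_mul_I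
      · intro i hi1 hi2 h
        exact absurd (hfix0 i hi1 hi2) h
    · intro i hgi
      obtain ⟨hi1, hi2⟩ := hfixmem i hgi
      simp only [hc₁, hc₂, hd₁, hd₂, if_neg hi1, if_neg hi2]
      norm_num
  have hts : t * s = 1 := by
    refine stmt2_aux_mul γ hγγ d₁ d₂ c₁ c₂ ?_ ?_ ?_
    · refine cases3 _ ?_ ?_ ?_
      · intro i hi _
        simp only [hc₁, hc₂, hd₁, hd₂, if_pos hi, if_neg (h12' i hi),
          if_pos (h1 i hi), if_neg (h21' _ (h1 i hi))]
        norm_num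
      · intro i hi _
        simp only [hc₁, hc₂, hd₁, hd₂, if_pos hi, if_neg (h21' i hi),
          if_pos (h2 i hi), if_neg (h12' _ (h2 i hi))]
        linear_combination (-1 : ℂ) * Complex.I_mul_I
      · intro i hi1 hi2 h
        exact absurd (hfix0 i hi1 hi2) h
    · refine cases3 _ ?_ ?_ ?_
      · intro i hi _
        simp only [hc₁, hc₂, hd₁, hd₂, if_pos hi, if_neg (h12' i hi),
          if_pos (h1 i hi), if_neg (h21' _ (h1 i hi))]
        ring
      · intro i hi _
        simp only [hc₁, hc₂, hd₁, hd₂, if_pos hi, if_neg (h21' i hi),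
          if_pos (h2 i hi), if_neg (h12' _ (h2 i hi))]
        ring
      · intro i hi1 hi2 h
        exact absurd (hfix0 i hi1 hi2) h
    · intro i hgi
      obtain ⟨hi1, hi2⟩ := hfixmem i hgi
      simp only [hc₁, hc₂, hd₁, hd₂, if_neg hi1, if_neg hi2]
      norm_num
  -- index-swapping helpers
  have geq : ∀ x y : J, (γ x = γ y) ↔ (x = y) := fun x y => hbij.1.eq_iff
  have gsw : ∀ x y : J, (γ x = y) ↔ (x = γ y) :=
    fun x y => ⟨fun h => by rw [← h, hγγ], fun h => by rw [h, hγγ]⟩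
  -- conjugation identities for s and t
  have hσs : (s.map (starRingEnd ℂ)).submatrix γ γ = s.submatrix id γ := by
    ext i j
    simp only [Matrix.submatrix_apply, Matrix.map_apply, hsdef, Matrix.of_apply, map_add,
      apply_ite (starRingEnd ℂ), map_zero, hγγ, geq, gsw, id_eq]
    by_cases hi1 : i ∈ J1
    · have hgi2 : γ i ∈ J2 := h1 i hi1
      simp only [hc₁, hc₂, if_pos hi1, if_neg (h12' i hi1), if_pos hgi2,
        if_neg (h21' _ hgi2), map_neg, Complex.conj_I, map_one, neg_neg]
      split_ifs <;> ring
    · by_cases hi2 : i ∈ J2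
      · have hgi1 : γ i ∈ J1 := h2 i hi2
        simp only [hc₁, hc₂, if_pos hi2, if_neg (h21' i hi2), if_pos hgi1,
          if_neg (h12' _ hgi1), Complex.conj_I, map_one]
        try (split_ifs <;> ring)
      · have hgi := hfix0 i hi1 hi2
        simp only [hgi, hc₁, hc₂, if_neg hi1, if_neg hi2, map_one, map_zero]
        try (split_ifs <;> ring)
  have hσt : (t.map (starRingEnd ℂ)).submatrix γ γ = t.submatrix γ id := by
    ext i j
    simp only [Matrix.submatrix_apply, Matrix.map_apply, htdef, Matrix.of_apply, map_add,
      apply_ite (starRingEnd ℂ), map_zero, hγγ, geq, gsw, id_eq]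
    by_cases hi1 : i ∈ J1
    · have hgi2 : γ i ∈ J2 := h1 i hi1
      simp only [hd₁, hd₂, if_pos hgi2, if_neg (h21' _ hgi2), map_div₀, Complex.conj_I,
        map_neg, map_ofNat, neg_neg, neg_div]
      split_ifs <;> ring
    · by_cases hi2 : i ∈ J2
      · have hgi1 : γ i ∈ J1 := h2 i hi2
        simp only [hd₁, hd₂, if_pos hgi1, map_div₀, map_one, map_ofNat]
        try (split_ifs <;> ring)
      · have hgi := hfix0 i hi1 hi2
        simp only [hgi, hd₁, hd₂, if_neg hi1, if_neg hi2, map_one, map_zero]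
        try (split_ifs <;> ring)
  -- multiplicativity of the anti-linear involution
  have hσmul : ∀ X Y : Matrix J J ℂ,
      (((X * Y).map (starRingEnd ℂ)).submatrix γ γ : Matrix J J ℂ) =
        (X.map (starRingEnd ℂ)).submatrix γ γ * (Y.map (starRingEnd ℂ)).submatrix γ γ := by
    intro X Y
    rw [Matrix.map_mul]
    exact Matrix.submatrix_mul _ _ γ γ γ hbij
  have subL : ∀ x y : Matrix J J ℂ, x.submatrix γ id * y = (x * y).submatrix γ id := by
    intro x y
    ext i j
    simp [Matrix.mul_apply]
  have subR : ∀ x y : Matrix J J ℂ, x * y.submatrix id γ = (x * y).submatrix id γ := by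
    intro x y
    ext i j
    simp [Matrix.mul_apply]
  have hmulkey : ∀ A B : Matrix J J ℂ, (s*A*t)*(s*B*t) = s*(A*B)*t := by
    intro A B
    calc (s*A*t)*(s*B*t) = s*(A*(t*s)*B)*t := by noncomm_ring
    _ = s*(A*B)*t := by rw [hts, mul_one]
  have hcanc : ∀ X : Matrix J J ℂ, t * (s * X * t) * s = X := by
    intro X
    calc t*(s*X*t)*s = (t*s)*X*(t*s) := by noncomm_ring
    _ = X := by rw [hts, one_mul, mul_one]
  refine ⟨{ toFun := fun m => s * (m.map (algebraMap ℝ ℂ)) * t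
            map_one' := by rw [Matrix.map_one _ (map_zero _) (map_one _), mul_one, hst]
            map_mul' := fun x y => by rw [Matrix.map_mul, ← hmulkey]
            map_zero' := by
              rw [Matrix.map_zero _ (map_zero _), mul_zero, zero_mul]
            map_add' := fun x y => by
              have : (x + y).map (algebraMap ℝ ℂ) =
                  x.map (algebraMap ℝ ℂ) + y.map (algebraMap ℝ ℂ) := by
                ext i j
                simp [Matrix.map_apply]
              rw [this, mul_add, add_mul]
            commutes' := fun r => by
              have h1 : (algebraMap ℝ (Matrix J J ℝ) r).map (algebraMap ℝ ℂ) =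
                  algebraMap ℝ (Matrix J J ℂ) r := by
                ext i j
                simp [Matrix.algebraMap_matrix_apply, apply_ite (algebraMap ℝ ℂ), apply_ite (Complex.ofReal)]
              rw [h1, Algebra.algebraMap_eq_smul_one, mul_smul_comm, smul_mul_assoc,
                mul_one, hst] }, ?_, ?_⟩
  · intro x y h
    simp only [AlgHom.coe_mk, RingHom.coe_mk, MonoidHom.coe_mk, OneHom.coe_mk] at h
    have h2 : x.map (algebraMap ℝ ℂ) = y.map (algebraMap ℝ ℂ) := by
      have := congrArg (fun z => t * z * s) h
      simpa only [hcanc] using this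
    ext i j
    have h3 : algebraMap ℝ ℂ (x i j) = algebraMap ℝ ℂ (y i j) := by
      have := congrFun (congrFun h2 i) j
      simpa [Matrix.map_apply] using this
    exact_mod_cast h3
  · ext a
    simp only [Set.mem_range, Set.mem_setOf_eq, AlgHom.coe_mk, RingHom.coe_mk,
      MonoidHom.coe_mk, OneHom.coe_mk]
    constructor
    · rintro ⟨m, rfl⟩ i j
      set X := m.map (algebraMap ℝ ℂ) with hX
      have hXconj : X.map (starRingEnd ℂ) = X := by
        ext i j
        simp [hX, Matrix.map_apply, Complex.conj_ofReal]
      have key : ((s * X * t).map (starRingEnd ℂ)).submatrix γ γ = s * X * t := by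
        rw [hσmul, hσmul, hσs, hσt, hXconj]
        rw [← Matrix.submatrix_mul s X id γ γ hbij]
        rw [← Matrix.submatrix_mul (s*X) t id γ id hbij, Matrix.submatrix_id_id]
      have e1 := congrFun (congrFun key j) i
      simp only [Matrix.submatrix_apply, Matrix.map_apply] at e1
      rw [← e1]
      simp [Complex.star_def]
    · intro ha
      have hσa : (a.map (starRingEnd ℂ)).submatrix γ γ = a := by
        ext i j
        simp only [Matrix.submatrix_apply, Matrix.map_apply]
        rw [ha j i]
        simp [Complex.star_def]
      set B := t * a * s with hB
      have hBσ : (B.map (starRingEnd ℂ)).submatrix γ γ = B.submatrix γ γ := by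
        rw [hB, hσmul, hσmul, hσs, hσt, hσa, subL, subR, subL,
          Matrix.submatrix_submatrix]
        rfl
      have hreal : ∀ i j, (starRingEnd ℂ) (B i j) = B i j := by
        intro i j
        have := congrFun (congrFun hBσ (γ i)) (γ j)
        simpa [Matrix.submatrix_apply, Matrix.map_apply, hγγ] using this
      refine ⟨Matrix.of (fun i j => (B i j).re), ?_⟩
      have hm : (Matrix.of (fun i j => (B i j).re)).map (algebraMap ℝ ℂ) = B := by
        ext i j
        simpa [Matrix.map_apply] using Complex.conj_eq_iff_re.mp (hreal i j)
      rw [hm, hB]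
      calc s * (t * a * s) * t = (s * t) * a * (s * t) := by noncomm_ring
      _ = a := by rw [hst, one_mul, mul_one]
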